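/- Let D = d₁ d₂, let F₁, …, F_D be d₂ × d₁ complex matrices with tr(F_α* F_β) = δ_{αβ}, let λ₁, …, λ_D > 0, and define the linear map φ(a) = Σ_{α=2}^{D} λ_α F_α a F_α* − λ₁ F₁ a F₁* on M_{d₁}(ℂ). Let 1 ≤ k ≤ min(d₁, d₂) and suppose 0 < g_k(F₁) < 1. If λ_α < λ₁ g_k(F₁) / (1 − g_k(F₁)) for every α ∈ {2, …, D}, then φ is not k-positive. -/

import Mathlib

open scoped ComplexOrder
open Matrix

/-- A linear map `φ : M_{d₁}(ℂ) → M_{d₂}(ℂ)` is `k`-positive if `id_k ⊗ φ` sends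
positive semidefinite matrices to positive semidefinite matrices. -/
def kPositive (d₁ d₂ k : ℕ)
    (φ : Matrix (Fin d₁) (Fin d₁) ℂ →ₗ[ℂ] Matrix (Fin d₂) (Fin d₂) ℂ) : Prop :=
  ∀ a : Matrix (Fin k × Fin d₁) (Fin k × Fin d₁) ℂ, a.PosSemidef →
    (Matrix.of fun p q : Fin k × Fin d₂ =>
      φ (Matrix.of fun x y => a (p.1, x) (q.1, y)) p.2 q.2).PosSemidef

/-- The sum of the `k` largest values of a function on a finite index type. -/
noncomputable def sumKLargest {n : Type*} [Fintype n] (k : ℕ) (f : n → ℝ) : ℝ :=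
  sSup {x | ∃ s : Finset n, s.card = k ∧ x = ∑ i ∈ s, f i}

/-- `gk k F` is the sum of the `k` largest eigenvalues of `F * Fᴴ`. -/
noncomputable def gk {d₂ d₁ : ℕ} (k : ℕ) (F : Matrix (Fin d₂) (Fin d₁) ℂ) : ℝ :=
  sumKLargest k (Matrix.isHermitian_mul_conjTranspose_self F).eigenvalues

/-! ### Auxiliary lemmas -/

lemma sumKLargest_attained {n : Type*} [Fintype n] (k : ℕ) (hk : k ≤ Fintype.card n)
    (f : n → ℝ) : ∃ s : Finset n, s.card = k ∧ sumKLargest k f = ∑ i ∈ s, f i := by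
  have hset : {x | ∃ s : Finset n, s.card = k ∧ x = ∑ i ∈ s, f i}
      = ↑((Finset.univ.powersetCard k).image fun s => ∑ i ∈ s, f i) := by
    ext x
    simp only [Finset.coe_image, Set.mem_image, Finset.mem_coe, Finset.mem_powersetCard,
      Set.mem_setOf_eq]
    constructor
    · rintro ⟨s, hs, rfl⟩; exact ⟨s, ⟨Finset.subset_univ s, hs⟩, rfl⟩
    · rintro ⟨s, ⟨-, hs⟩, rfl⟩; exact ⟨s, hs, rfl⟩
  have hne : {x | ∃ s : Finset n, s.card = k ∧ x = ∑ i ∈ s, f i}.Nonempty := by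
    obtain ⟨s, -, hs⟩ := Finset.exists_subset_card_eq (Finset.card_univ (α := n) ▸ hk)
    exact ⟨∑ i ∈ s, f i, s, hs, rfl⟩
  have hfin : {x | ∃ s : Finset n, s.card = k ∧ x = ∑ i ∈ s, f i}.Finite := by
    rw [hset]; exact Finset.finite_toSet _
  exact hne.csSup_mem hfin

lemma herm_quad {d : ℕ} (A : Matrix (Fin d) (Fin d) ℂ) (hA : A.IsHermitian) (m : Fin d) :
    ∑ j, ∑ j', (starRingEnd ℂ) (hA.eigenvectorBasis m j) * A j j' * hA.eigenvectorBasis m j'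
      = (hA.eigenvalues m : ℂ) := by
  have h1 := hA.mulVec_eigenvectorBasis m
  have h2 := (orthonormal_iff_ite.mp hA.eigenvectorBasis.orthonormal) m m
  simp only [PiLp.inner_apply, RCLike.inner_apply, if_pos rfl] at h2
  calc ∑ j, ∑ j', (starRingEnd ℂ) (hA.eigenvectorBasis m j) * A j j' * hA.eigenvectorBasis m j'
      = ∑ j, (starRingEnd ℂ) (hA.eigenvectorBasis m j) * (A *ᵥ ⇑(hA.eigenvectorBasis m)) j := by
        simp [Matrix.mulVec, dotProduct, Finset.mul_sum, mul_assoc]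
    _ = ∑ j, (starRingEnd ℂ) (hA.eigenvectorBasis m j)
          * ((hA.eigenvalues m : ℂ) * hA.eigenvectorBasis m j) := by
        rw [h1]; simp [Complex.real_smul]
    _ = ∑ j, (hA.eigenvalues m : ℂ)
          * ((starRingEnd ℂ) (hA.eigenvectorBasis m j) * hA.eigenvectorBasis m j) := by
        apply Finset.sum_congr rfl; intros; ring
    _ = (hA.eigenvalues m : ℂ) := by
        rw [← Finset.mul_sum, (Finset.sum_congr rfl fun _ _ => mul_comm _ _).trans (h2.trans (if_pos trivial))]; simp

lemma rankOne_posSemidef {n : Type*} [Fintype n] [DecidableEq n] (x : n → ℂ) :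
    (Matrix.of fun p q => x p * (starRingEnd ℂ) (x q)).PosSemidef := by
  rw [posSemidef_iff_dotProduct_mulVec]
  constructor
  · ext p q; simp [conjTranspose_apply, mul_comm]
  · intro v
    have : star v ⬝ᵥ ((Matrix.of fun p q => x p * (starRingEnd ℂ) (x q)) *ᵥ v)
        = (starRingEnd ℂ) (∑ q, (starRingEnd ℂ) (x q) * v q)
          * (∑ q, (starRingEnd ℂ) (x q) * v q) := by
      simp [dotProduct, Matrix.mulVec, Finset.mul_sum, Finset.sum_mul, map_sum]
      rw [Finset.sum_comm]
      congr 1; ext p; congr 1; ext q; ring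
    rw [this, ← Complex.normSq_eq_conj_mul_self]
    exact_mod_cast Complex.normSq_nonneg _

lemma kraus_quad {k₀ n₁ n₂ : Type*} [Fintype k₀] [Fintype n₁] [Fintype n₂]
    (K : Matrix n₂ n₁ ℂ) (xv : k₀ × n₁ → ℂ) (ξ : k₀ × n₂ → ℂ) :
    ∑ p : k₀ × n₂, ∑ q : k₀ × n₂, (starRingEnd ℂ) (ξ p) *
      ((K * (Matrix.of fun x y => xv (p.1, x) * (starRingEnd ℂ) (xv (q.1, y))) * Kᴴ) p.2 q.2) * ξ q
    = (∑ p : k₀ × n₂, (starRingEnd ℂ) (ξ p) * ∑ x, K p.2 x * xv (p.1, x)) *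
      (starRingEnd ℂ) (∑ p : k₀ × n₂, (starRingEnd ℂ) (ξ p) * ∑ x, K p.2 x * xv (p.1, x)) := by
  have hmat : ∀ p q : k₀ × n₂,
      (K * (Matrix.of fun x y => xv (p.1, x) * (starRingEnd ℂ) (xv (q.1, y))) * Kᴴ) p.2 q.2
      = (∑ x, K p.2 x * xv (p.1, x))
        * ∑ y, (starRingEnd ℂ) (K q.2 y) * (starRingEnd ℂ) (xv (q.1, y)) := by
    intro p q
    rw [Matrix.mul_apply, Finset.sum_mul_sum, Finset.sum_comm]
    apply Finset.sum_congr rfl; intro y _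
    rw [Matrix.mul_apply, Finset.sum_mul]
    apply Finset.sum_congr rfl; intro x _
    simp only [Matrix.conjTranspose_apply, Matrix.of_apply, Complex.star_def]
    ring
  calc ∑ p : k₀ × n₂, ∑ q : k₀ × n₂, (starRingEnd ℂ) (ξ p) *
        ((K * (Matrix.of fun x y => xv (p.1, x) * (starRingEnd ℂ) (xv (q.1, y))) * Kᴴ) p.2 q.2) * ξ q
      = ∑ p : k₀ × n₂, ∑ q : k₀ × n₂,
          ((starRingEnd ℂ) (ξ p) * ∑ x, K p.2 x * xv (p.1, x))
          * (ξ q * ∑ y, (starRingEnd ℂ) (K q.2 y) * (starRingEnd ℂ) (xv (q.1, y))) := by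
        apply Finset.sum_congr rfl; intro p _
        apply Finset.sum_congr rfl; intro q _
        rw [hmat p q]; ring
    _ = (∑ p : k₀ × n₂, (starRingEnd ℂ) (ξ p) * ∑ x, K p.2 x * xv (p.1, x))
        * (∑ q : k₀ × n₂, ξ q * ∑ y, (starRingEnd ℂ) (K q.2 y) * (starRingEnd ℂ) (xv (q.1, y))) := by
        rw [Finset.sum_mul_sum]
    _ = _ := by
        congr 1
        rw [map_sum]
        apply Finset.sum_congr rfl; intro q _
        simp only [_root_.map_mul, map_sum, Complex.conj_conj]

/-- Spectral condition for failure of `k`-positivity of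
`φ(a) = ∑_{α≥2} λ_α F_α a F_αᴴ − λ₁ F₁ a F₁ᴴ`. -/
theorem not_kPositive_of_spectral_condition (d₁ d₂ k : ℕ)
    (hk1 : 1 ≤ k) (hk2 : k ≤ min d₁ d₂)
    (F : Fin (d₁ * d₂) → Matrix (Fin d₂) (Fin d₁) ℂ)
    (hF : ∀ α β, ((F α)ᴴ * F β).trace = if α = β then 1 else 0)
    (lam : Fin (d₁ * d₂) → ℝ) (hlam : ∀ α, 0 < lam α)
    (α₁ : Fin (d₁ * d₂)) (hα₁ : (α₁ : ℕ) = 0)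
    (φ : Matrix (Fin d₁) (Fin d₁) ℂ →ₗ[ℂ] Matrix (Fin d₂) (Fin d₂) ℂ)
    (hφ : ∀ a, φ a = (∑ α ∈ Finset.univ.erase α₁, (lam α : ℂ) • (F α * a * (F α)ᴴ))
        - (lam α₁ : ℂ) • (F α₁ * a * (F α₁)ᴴ))
    (hg0 : 0 < gk k (F α₁)) (hg1 : gk k (F α₁) < 1)
    (hcond : ∀ α ∈ Finset.univ.erase α₁,
      lam α < lam α₁ * gk k (F α₁) / (1 - gk k (F α₁))) :
    ¬ kPositive d₁ d₂ k φ := by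
  intro hpos
  classical
  have hH : (F α₁ * (F α₁)ᴴ).IsHermitian := Matrix.isHermitian_mul_conjTranspose_self (F α₁)
  -- attain gk on a set s of cardinality k
  obtain ⟨s, hscard, hgs⟩ := sumKLargest_attained k
    (by simpa using le_trans hk2 (min_le_right d₁ d₂)) hH.eigenvalues
  have hgs' : gk k (F α₁) = ∑ m ∈ s, hH.eigenvalues m := hgs
  -- enumeration of s
  let σ : Fin k → Fin d₂ := fun i => ((Finset.equivFinOfCardEq hscard).symm i : Fin d₂)
  have hσinj : Function.Injective σ := fun i j h => by
    have := Subtype.coe_injective h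
    exact (Finset.equivFinOfCardEq hscard).symm.injective this
  have hσsum : ∀ f : Fin d₂ → ℂ, ∑ i : Fin k, f (σ i) = ∑ m ∈ s, f m := by
    intro f
    rw [← Finset.sum_coe_sort s f]
    exact Equiv.sum_comp (Finset.equivFinOfCardEq hscard).symm (fun m => f m)
  -- eigenvectors
  set u : Fin d₂ → Fin d₂ → ℂ := fun m => ⇑(hH.eigenvectorBasis m) with hu
  have hu_on : ∀ m m', ∑ j, (starRingEnd ℂ) (u m j) * u m' j = if m = m' then 1 else 0 := by
    intro m m'
    have := (orthonormal_iff_ite.mp hH.eigenvectorBasis.orthonormal) m m'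
    simp only [PiLp.inner_apply, RCLike.inner_apply] at this
    rw [← this]; exact Finset.sum_congr rfl fun _ _ => mul_comm _ _
  -- vectors
  set xv : Fin k × Fin d₁ → ℂ :=
    fun p => ∑ j, (starRingEnd ℂ) (F α₁ j p.2) * u (σ p.1) j with hxv
  set ξ : Fin k × Fin d₂ → ℂ := fun p => u (σ p.1) p.2 with hξ
  set c : Fin (d₁ * d₂) → ℂ :=
    fun α => ∑ p : Fin k × Fin d₂, (starRingEnd ℂ) (ξ p) * ∑ x, F α p.2 x * xv (p.1, x) with hc
  -- the PSD input matrix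
  have hPSD := hpos (Matrix.of fun p q => xv p * (starRingEnd ℂ) (xv q)) (rankOne_posSemidef xv)
  have hq := hPSD.dotProduct_mulVec_nonneg ξ
  -- Claim B : c α₁ = g
  have hinner : ∀ m : Fin d₂, ∀ j₀,
      ∑ x, F α₁ j₀ x * ∑ j, (starRingEnd ℂ) (F α₁ j x) * u m j
        = ∑ j, (F α₁ * (F α₁)ᴴ) j₀ j * u m j := by
    intro m j₀
    simp only [Finset.mul_sum]
    rw [Finset.sum_comm]
    apply Finset.sum_congr rfl; intro j _
    rw [Matrix.mul_apply, Finset.sum_mul]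
    apply Finset.sum_congr rfl; intro x _
    simp only [Matrix.conjTranspose_apply, Complex.star_def]
    ring
  have key : ∀ m : Fin d₂,
      ∑ j₀, (starRingEnd ℂ) (u m j₀) * ∑ x, F α₁ j₀ x * ∑ j, (starRingEnd ℂ) (F α₁ j x) * u m j
        = (hH.eigenvalues m : ℂ) := by
    intro m
    have h2 := herm_quad (F α₁ * (F α₁)ᴴ) hH m
    calc ∑ j₀, (starRingEnd ℂ) (u m j₀)
            * ∑ x, F α₁ j₀ x * ∑ j, (starRingEnd ℂ) (F α₁ j x) * u m j
        = ∑ j₀, (starRingEnd ℂ) (u m j₀) * ∑ j, (F α₁ * (F α₁)ᴴ) j₀ j * u m j := by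
          apply Finset.sum_congr rfl; intro j₀ _
          rw [hinner m j₀]
      _ = ∑ j₀, ∑ j, (starRingEnd ℂ) (u m j₀) * (F α₁ * (F α₁)ᴴ) j₀ j * u m j := by
          apply Finset.sum_congr rfl; intro j₀ _
          rw [Finset.mul_sum]
          apply Finset.sum_congr rfl; intro j _
          ring
      _ = (hH.eigenvalues m : ℂ) := by rw [← h2]
  have hcB : c α₁ = ((∑ m ∈ s, hH.eigenvalues m : ℝ) : ℂ) := by
    simp only [hc, hξ, hxv]
    rw [Fintype.sum_prod_type]
    calc ∑ i : Fin k, ∑ j₀, (starRingEnd ℂ) (u (σ i) j₀)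
            * ∑ x, F α₁ j₀ x * ∑ j, (starRingEnd ℂ) (F α₁ j x) * u (σ i) j
        = ∑ i : Fin k, (hH.eigenvalues (σ i) : ℂ) := by
          apply Finset.sum_congr rfl; intro i _
          exact key (σ i)
      _ = ∑ m ∈ s, (hH.eigenvalues m : ℂ) := hσsum (fun m => (hH.eigenvalues m : ℂ))
      _ = ((∑ m ∈ s, hH.eigenvalues m : ℝ) : ℂ) := by push_cast; ring
  -- Claim C : Parseval
  -- Parseval setup
  have e : Fin (d₁ * d₂) ≃ Fin d₂ × Fin d₁ :=
    Fintype.equivOfCardEq (by simp [mul_comm])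
  set V : Matrix (Fin (d₁ * d₂)) (Fin d₂ × Fin d₁) ℂ := fun α t => F α t.1 t.2 with hV
  have hVVH : V * Vᴴ = 1 := by
    ext α β
    have htr := hF β α
    simp only [Matrix.trace, Matrix.diag, Matrix.mul_apply, Matrix.conjTranspose_apply,
      Complex.star_def] at htr
    rw [Matrix.mul_apply]
    simp only [Matrix.conjTranspose_apply, Complex.star_def, hV, Matrix.one_apply]
    rw [Fintype.sum_prod_type,
      show (if α = β then (1:ℂ) else 0) = if β = α then 1 else 0 by simp [eq_comm],
      ← htr, Finset.sum_comm]
    apply Finset.sum_congr rfl; intro x _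
    apply Finset.sum_congr rfl; intro j _
    exact mul_comm _ _
  have hVHV : Vᴴ * V = 1 := (Matrix.mul_eq_one_comm_of_equiv e.symm).mpr hVVH
  have hdelta : ∀ t t' : Fin d₂ × Fin d₁,
      ∑ α, (starRingEnd ℂ) (V α t') * V α t = if t' = t then 1 else 0 := by
    intro t t'
    have h0 := congrFun (congrFun hVHV t') t
    simpa [Matrix.mul_apply, Matrix.conjTranspose_apply, Complex.star_def,
      Matrix.one_apply] using h0
  set G : Fin d₂ × Fin d₁ → ℂ :=
    fun t => ∑ i : Fin k, (starRingEnd ℂ) (u (σ i) t.1) * xv (i, t.2) with hG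
  have hcG : ∀ α, c α = ∑ t, V α t * G t := by
    intro α
    simp only [hc, hξ, hG, hV]
    simp only [Finset.mul_sum]
    calc ∑ p : Fin k × Fin d₂, ∑ x, (starRingEnd ℂ) (u (σ p.1) p.2) * (F α p.2 x * xv (p.1, x))
        = ∑ i : Fin k, ∑ j, ∑ x,
            (starRingEnd ℂ) (u (σ i) j) * (F α j x * xv (i, x)) := by
          rw [Fintype.sum_prod_type]
      _ = ∑ j, ∑ i : Fin k, ∑ x,
            (starRingEnd ℂ) (u (σ i) j) * (F α j x * xv (i, x)) := Finset.sum_comm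
      _ = ∑ j, ∑ x, ∑ i : Fin k,
            (starRingEnd ℂ) (u (σ i) j) * (F α j x * xv (i, x)) := by
          apply Finset.sum_congr rfl; intro j _; exact Finset.sum_comm
      _ = ∑ t : Fin d₂ × Fin d₁, ∑ i : Fin k,
            F α t.1 t.2 * ((starRingEnd ℂ) (u (σ i) t.1) * xv (i, t.2)) := by
          rw [Fintype.sum_prod_type]
          apply Finset.sum_congr rfl; intro j _
          apply Finset.sum_congr rfl; intro x _
          apply Finset.sum_congr rfl; intro i _
          ring
  have hPars : ∑ α, c α * (starRingEnd ℂ) (c α) = ∑ t, G t * (starRingEnd ℂ) (G t) := by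
    calc ∑ α, c α * (starRingEnd ℂ) (c α)
        = ∑ α, ∑ t, ∑ t', (V α t * G t) * ((starRingEnd ℂ) (V α t') * (starRingEnd ℂ) (G t')) := by
          apply Finset.sum_congr rfl; intro α _
          rw [hcG α, map_sum, Finset.sum_mul_sum]
          apply Finset.sum_congr rfl; intro t _
          apply Finset.sum_congr rfl; intro t' _
          rw [_root_.map_mul]
      _ = ∑ t, ∑ t', (G t * (starRingEnd ℂ) (G t')) * ∑ α, (starRingEnd ℂ) (V α t') * V α t := by
          rw [Finset.sum_comm]
          apply Finset.sum_congr rfl; intro t _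
          rw [Finset.sum_comm]
          apply Finset.sum_congr rfl; intro t' _
          rw [Finset.mul_sum]
          apply Finset.sum_congr rfl; intro α _
          ring
      _ = ∑ t, ∑ t', (G t * (starRingEnd ℂ) (G t')) * (if t' = t then 1 else 0) := by
          apply Finset.sum_congr rfl; intro t _
          apply Finset.sum_congr rfl; intro t' _
          rw [hdelta]
      _ = ∑ t, G t * (starRingEnd ℂ) (G t) := by
          apply Finset.sum_congr rfl; intro t _
          simp
  have hGnorm : ∑ t, G t * (starRingEnd ℂ) (G t) = ((∑ m ∈ s, hH.eigenvalues m : ℝ) : ℂ) := by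
    have hxq : ∀ i : Fin k,
        ∑ x, xv (i, x) * (starRingEnd ℂ) (xv (i, x)) = (hH.eigenvalues (σ i) : ℂ) := by
      intro i
      simp only [hxv, map_sum, _root_.map_mul, Complex.conj_conj]
      calc ∑ x, (∑ j, (starRingEnd ℂ) (F α₁ j x) * u (σ i) j)
              * ∑ j', F α₁ j' x * (starRingEnd ℂ) (u (σ i) j')
          = ∑ x, ∑ j, ∑ j', ((starRingEnd ℂ) (F α₁ j x) * u (σ i) j)
              * (F α₁ j' x * (starRingEnd ℂ) (u (σ i) j')) := by
            apply Finset.sum_congr rfl; intro x _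
            rw [Finset.sum_mul_sum]
        _ = ∑ j, ∑ x, ∑ j', ((starRingEnd ℂ) (F α₁ j x) * u (σ i) j)
              * (F α₁ j' x * (starRingEnd ℂ) (u (σ i) j')) := Finset.sum_comm
        _ = ∑ j, ∑ j', ∑ x, ((starRingEnd ℂ) (F α₁ j x) * u (σ i) j)
              * (F α₁ j' x * (starRingEnd ℂ) (u (σ i) j')) := by
            apply Finset.sum_congr rfl; intro j _; exact Finset.sum_comm
        _ = ∑ j', ∑ j, ∑ x, ((starRingEnd ℂ) (F α₁ j x) * u (σ i) j)
              * (F α₁ j' x * (starRingEnd ℂ) (u (σ i) j')) := Finset.sum_comm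
        _ = ∑ j', ∑ j, (starRingEnd ℂ) (u (σ i) j') * (F α₁ * (F α₁)ᴴ) j' j * u (σ i) j := by
            apply Finset.sum_congr rfl; intro j' _
            apply Finset.sum_congr rfl; intro j _
            rw [Matrix.mul_apply, Finset.mul_sum, Finset.sum_mul]
            apply Finset.sum_congr rfl; intro x _
            simp only [Matrix.conjTranspose_apply, Complex.star_def]
            ring
        _ = (hH.eigenvalues (σ i) : ℂ) := herm_quad (F α₁ * (F α₁)ᴴ) hH (σ i)
    calc ∑ t, G t * (starRingEnd ℂ) (G t)
        = ∑ t : Fin d₂ × Fin d₁, ∑ i : Fin k, ∑ i' : Fin k,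
            ((starRingEnd ℂ) (u (σ i) t.1) * xv (i, t.2))
            * (u (σ i') t.1 * (starRingEnd ℂ) (xv (i', t.2))) := by
          apply Finset.sum_congr rfl; intro t _
          simp only [hG, map_sum, _root_.map_mul, Complex.conj_conj]
          rw [Finset.sum_mul_sum]
      _ = ∑ i : Fin k, ∑ i' : Fin k, ∑ t : Fin d₂ × Fin d₁,
            ((starRingEnd ℂ) (u (σ i) t.1) * xv (i, t.2))
            * (u (σ i') t.1 * (starRingEnd ℂ) (xv (i', t.2))) := by
          rw [Finset.sum_comm]
          apply Finset.sum_congr rfl; intro i _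
          exact Finset.sum_comm
      _ = ∑ i : Fin k, ∑ i' : Fin k,
            (∑ j, (starRingEnd ℂ) (u (σ i) j) * u (σ i') j)
            * (∑ x, xv (i, x) * (starRingEnd ℂ) (xv (i', x))) := by
          apply Finset.sum_congr rfl; intro i _
          apply Finset.sum_congr rfl; intro i' _
          rw [Finset.sum_mul_sum, Fintype.sum_prod_type]
          apply Finset.sum_congr rfl; intro j _
          apply Finset.sum_congr rfl; intro x _
          ring
      _ = ∑ i : Fin k, ∑ x, xv (i, x) * (starRingEnd ℂ) (xv (i, x)) := by
          apply Finset.sum_congr rfl; intro i _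
          have : ∀ i' : Fin k, (∑ j, (starRingEnd ℂ) (u (σ i) j) * u (σ i') j)
              = if i = i' then 1 else 0 := by
            intro i'
            rw [hu_on (σ i) (σ i')]
            by_cases h : i = i'
            · simp [h]
            · rw [if_neg (fun hc => h (hσinj hc)), if_neg h]
          simp only [this]
          simp
      _ = ∑ i : Fin k, (hH.eigenvalues (σ i) : ℂ) := by
          apply Finset.sum_congr rfl; intro i _; exact hxq i
      _ = ∑ m ∈ s, (hH.eigenvalues m : ℂ) := hσsum (fun m => (hH.eigenvalues m : ℂ))
      _ = ((∑ m ∈ s, hH.eigenvalues m : ℝ) : ℂ) := by push_cast; ring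
  have hcC : ∑ α, c α * (starRingEnd ℂ) (c α) = ((∑ m ∈ s, hH.eigenvalues m : ℝ) : ℂ) :=
    hPars.trans hGnorm
  -- Claim A : the quadratic form
  have hT : ∀ α : Fin (d₁ * d₂), ∑ p : Fin k × Fin d₂, ∑ q : Fin k × Fin d₂,
      (starRingEnd ℂ) (ξ p) *
        ((F α * (Matrix.of fun x y => xv (p.1, x) * (starRingEnd ℂ) (xv (q.1, y))) * (F α)ᴴ)
          p.2 q.2) * ξ q
      = c α * (starRingEnd ℂ) (c α) := by
    intro α
    simpa only [hc] using kraus_quad (F α) xv ξ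
  have hcA : star ξ ⬝ᵥ ((Matrix.of fun p q : Fin k × Fin d₂ =>
        φ (Matrix.of fun x y => (Matrix.of fun p' q' => xv p' * (starRingEnd ℂ) (xv q'))
          (p.1, x) (q.1, y)) p.2 q.2) *ᵥ ξ)
      = ∑ α ∈ Finset.univ.erase α₁, (lam α : ℂ) * (c α * (starRingEnd ℂ) (c α))
        - (lam α₁ : ℂ) * (c α₁ * (starRingEnd ℂ) (c α₁)) := by
    calc star ξ ⬝ᵥ ((Matrix.of fun p q : Fin k × Fin d₂ =>
            φ (Matrix.of fun x y => (Matrix.of fun p' q' => xv p' * (starRingEnd ℂ) (xv q'))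
              (p.1, x) (q.1, y)) p.2 q.2) *ᵥ ξ)
        = ∑ p : Fin k × Fin d₂, ∑ q : Fin k × Fin d₂, (starRingEnd ℂ) (ξ p) *
            (φ (Matrix.of fun x y => xv (p.1, x) * (starRingEnd ℂ) (xv (q.1, y))) p.2 q.2) * ξ q := by
          simp only [dotProduct, Matrix.mulVec, Pi.star_apply, Complex.star_def,
            Finset.mul_sum, Matrix.of_apply]
          apply Finset.sum_congr rfl; intro p _
          apply Finset.sum_congr rfl; intro q _
          ring
      _ = ∑ p : Fin k × Fin d₂, ∑ q : Fin k × Fin d₂,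
            ((∑ α ∈ Finset.univ.erase α₁, (lam α : ℂ) *
              ((starRingEnd ℂ) (ξ p) *
                ((F α * (Matrix.of fun x y => xv (p.1, x) * (starRingEnd ℂ) (xv (q.1, y)))
                  * (F α)ᴴ) p.2 q.2) * ξ q))
            - (lam α₁ : ℂ) *
              ((starRingEnd ℂ) (ξ p) *
                ((F α₁ * (Matrix.of fun x y => xv (p.1, x) * (starRingEnd ℂ) (xv (q.1, y)))
                  * (F α₁)ᴴ) p.2 q.2) * ξ q)) := by
          apply Finset.sum_congr rfl; intro p _
          apply Finset.sum_congr rfl; intro q _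
          rw [hφ]
          simp only [Matrix.sub_apply, Matrix.sum_apply, Matrix.smul_apply, smul_eq_mul,
            sub_mul, mul_sub, Finset.sum_mul, Finset.mul_sum]
          congr 1
          · apply Finset.sum_congr rfl; intro α _
            ring
          · ring
      _ = (∑ α ∈ Finset.univ.erase α₁, (lam α : ℂ) *
            ∑ p : Fin k × Fin d₂, ∑ q : Fin k × Fin d₂,
              (starRingEnd ℂ) (ξ p) *
                ((F α * (Matrix.of fun x y => xv (p.1, x) * (starRingEnd ℂ) (xv (q.1, y)))
                  * (F α)ᴴ) p.2 q.2) * ξ q)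
          - (lam α₁ : ℂ) *
            ∑ p : Fin k × Fin d₂, ∑ q : Fin k × Fin d₂,
              (starRingEnd ℂ) (ξ p) *
                ((F α₁ * (Matrix.of fun x y => xv (p.1, x) * (starRingEnd ℂ) (xv (q.1, y)))
                  * (F α₁)ᴴ) p.2 q.2) * ξ q := by
          simp only [Finset.sum_sub_distrib]
          congr 1
          · calc ∑ p : Fin k × Fin d₂, ∑ q : Fin k × Fin d₂, ∑ α ∈ Finset.univ.erase α₁,
                  (lam α : ℂ) * ((starRingEnd ℂ) (ξ p) * _ * ξ q)
                = ∑ p : Fin k × Fin d₂, ∑ α ∈ Finset.univ.erase α₁, ∑ q : Fin k × Fin d₂,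
                  (lam α : ℂ) * ((starRingEnd ℂ) (ξ p) * _ * ξ q) := by
                  apply Finset.sum_congr rfl; intro p _; exact Finset.sum_comm
              _ = ∑ α ∈ Finset.univ.erase α₁, ∑ p : Fin k × Fin d₂, ∑ q : Fin k × Fin d₂,
                  (lam α : ℂ) * ((starRingEnd ℂ) (ξ p) * _ * ξ q) := Finset.sum_comm
              _ = _ := by
                  apply Finset.sum_congr rfl; intro α _
                  rw [Finset.mul_sum]
                  apply Finset.sum_congr rfl; intro p _
                  rw [Finset.mul_sum]
          · rw [Finset.mul_sum]
            apply Finset.sum_congr rfl; intro p _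
            rw [Finset.mul_sum]
      _ = ∑ α ∈ Finset.univ.erase α₁, (lam α : ℂ) * (c α * (starRingEnd ℂ) (c α))
          - (lam α₁ : ℂ) * (c α₁ * (starRingEnd ℂ) (c α₁)) := by
          rw [hT α₁]
          congr 1
          apply Finset.sum_congr rfl; intro α _
          rw [hT α]
  -- Final arithmetic contradiction
  rw [hcA] at hq
  set g : ℝ := gk k (F α₁) with hgdef
  have hcB' : c α₁ = (g : ℂ) := by rw [hcB, ← hgs']
  have hn1 : Complex.normSq (c α₁) = g ^ 2 := by
    rw [hcB', Complex.normSq_ofReal]; ring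
  have hnsum : ∑ α, Complex.normSq (c α) = g := by
    have := hcC
    rw [← hgs'] at this
    simp only [Complex.mul_conj] at this
    exact_mod_cast this
  have hnerase : ∑ α ∈ Finset.univ.erase α₁, Complex.normSq (c α) = g - g ^ 2 := by
    have h0 : Complex.normSq (c α₁) + ∑ α ∈ Finset.univ.erase α₁, Complex.normSq (c α) = g := by
      rw [← hnsum]
      exact Finset.add_sum_erase Finset.univ (fun α => Complex.normSq (c α)) (Finset.mem_univ α₁)
    rw [hn1] at h0
    linarith
  have hgpos : 0 < g - g ^ 2 := by nlinarith
  have h1g : (0:ℝ) < 1 - g := by linarith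
  -- strict comparison
  obtain ⟨α₀, hα₀mem, hα₀pos⟩ : ∃ α ∈ Finset.univ.erase α₁, 0 < Complex.normSq (c α) := by
    by_contra hcon
    push_neg at hcon
    have : ∑ α ∈ Finset.univ.erase α₁, Complex.normSq (c α) ≤ 0 :=
      Finset.sum_nonpos hcon
    linarith [hnerase]
  have hlt : ∑ α ∈ Finset.univ.erase α₁, lam α * Complex.normSq (c α)
      < (lam α₁ * g / (1 - g)) * (g - g ^ 2) := by
    have hstep : ∑ α ∈ Finset.univ.erase α₁, lam α * Complex.normSq (c α)
        < ∑ α ∈ Finset.univ.erase α₁, (lam α₁ * g / (1 - g)) * Complex.normSq (c α) := by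
      apply Finset.sum_lt_sum
      · intro α hα
        exact mul_le_mul_of_nonneg_right (le_of_lt (hcond α hα)) (Complex.normSq_nonneg _)
      · exact ⟨α₀, hα₀mem, mul_lt_mul_of_pos_right (hcond α₀ hα₀mem) hα₀pos⟩
    rw [← Finset.mul_sum, hnerase] at hstep
    exact hstep
  have hmu : (lam α₁ * g / (1 - g)) * (g - g ^ 2) = lam α₁ * g ^ 2 := by
    field_simp
  have hr : ∑ α ∈ Finset.univ.erase α₁, lam α * Complex.normSq (c α)
      - lam α₁ * Complex.normSq (c α₁) < 0 := by
    rw [hn1]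
    rw [hmu] at hlt
    linarith
  have hcast : ∑ α ∈ Finset.univ.erase α₁, (lam α : ℂ) * (c α * (starRingEnd ℂ) (c α))
      - (lam α₁ : ℂ) * (c α₁ * (starRingEnd ℂ) (c α₁))
      = ((∑ α ∈ Finset.univ.erase α₁, lam α * Complex.normSq (c α)
          - lam α₁ * Complex.normSq (c α₁) : ℝ) : ℂ) := by
    simp only [Complex.mul_conj]
    push_cast
    ring
  rw [hcast] at hq
  rw [Complex.zero_le_real] at hq
  linarith
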